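/- Strong form of rigidity: suppose the six Hermitian involutions satisfy the nine commutation relations and the unit vector Ψ satisfies the ideal expectations ⟪Ψ, A₁₂(A₃₄(A₅₆ Ψ))⟫ = 1, ⟪Ψ, A₄₅(A₁₆(A₂₃ Ψ))⟫ = 1, ⟪Ψ, A₁₂(A₄₅ Ψ)⟫ = 1, ⟪Ψ, A₃₄(A₁₆ Ψ)⟫ = 1, ⟪Ψ, A₅₆(A₂₃ Ψ)⟫ = −1. Then there exists an orthonormal family b : Fin 2 × Fin 2 → H whose span equals V = span_ℂ {Ψ, A₁₂ Ψ, A₁₆ Ψ, A₁₂(A₁₆ Ψ)}, such that for all i, j ∈ Fin 2 (index arithmetic mod 2): A₁₂ b(i,j) = (−1)^i · b(i,j), A₄₅ b(i,j) = (−1)^j · b(i,j), A₁₆ b(i,j) = b(i+1, j), A₃₄ b(i,j) = b(i, j+1), A₅₆ b(i,j) = (−1)^i · b(i, j+1), A₂₃ b(i,j) = (−1)^j · b(i+1, j), and moreover Ψ = (b(0,0) + b(1,1)) / √2; i.e. in a suitable basis the operators act as the two-qubit Pauli operators Z⊗I, I⊗Z, X⊗I, I⊗X, Z⊗X, X⊗Z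 and Ψ is the Bell state. -/
import Mathlib


open scoped InnerProductSpace

section Helpers
variable {H : Type*} [NormedAddCommGroup H] [InnerProductSpace ℂ H]

private lemma sr_sa [CompleteSpace H] {A : H →L[ℂ] H} (hA : IsSelfAdjoint A) (x y : H) :
    ⟪A x, y⟫_ℂ = ⟪x, A y⟫_ℂ := by
  conv_lhs => rw [← ContinuousLinearMap.isSelfAdjoint_iff'.mp hA]
  exact ContinuousLinearMap.adjoint_inner_left A y x

private lemma sr_fix (u v : H) (hu : ‖u‖ = 1) (hv : ‖v‖ = 1) (h : ⟪u, v⟫_ℂ = 1) : v = u := by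
  have h1 : ‖u - v‖ ^ 2 = 0 := by
    rw [@norm_sub_sq ℂ, h, hu, hv]; norm_num
  have h2 : ‖u - v‖ = 0 := pow_eq_zero_iff (n := 2) (by norm_num) |>.mp h1
  have h3 := norm_eq_zero.mp h2
  rw [sub_eq_zero] at h3; exact h3.symm

private lemma sr_norm [CompleteSpace H] {A : H →L[ℂ] H} (hA : IsSelfAdjoint A)
    (hi : ∀ x, A (A x) = x) (x : H) : ‖A x‖ = ‖x‖ := by
  have h : ⟪A x, A x⟫_ℂ = ⟪x, x⟫_ℂ := by rw [sr_sa hA, hi]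
  have h2 : ‖A x‖ ^ 2 = ‖x‖ ^ 2 := by
    rw [← @inner_self_eq_norm_sq ℂ, ← @inner_self_eq_norm_sq ℂ, h]
  calc ‖A x‖ = Real.sqrt (‖A x‖ ^ 2) := (Real.sqrt_sq (norm_nonneg _)).symm
    _ = Real.sqrt (‖x‖ ^ 2) := by rw [h2]
    _ = ‖x‖ := Real.sqrt_sq (norm_nonneg _)

private lemma sr_ortho [CompleteSpace H] {A : H →L[ℂ] H} (hA : IsSelfAdjoint A) {u v : H}
    (hu : A u = u) (hv : A v = -v) : ⟪u, v⟫_ℂ = 0 := by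
  have h : ⟪u, v⟫_ℂ = -⟪u, v⟫_ℂ := by
    conv_lhs => rw [← hu]
    rw [sr_sa hA, hv, inner_neg_right]
  linear_combination h / 2

end Helpers

set_option maxHeartbeats 2000000 in
/-- **Strong form of rigidity.** If the ideal expectations hold exactly, then there is an
orthonormal basis `b` of `V = span {Ψ, A₁₂ Ψ, A₁₆ Ψ, A₁₂ (A₁₆ Ψ)}`, indexed by
`Fin 2 × Fin 2`, in which the six operators act as the two-qubit Pauli operators
`Z⊗I, I⊗Z, X⊗I, I⊗X, Z⊗X, X⊗Z`, and `Ψ` is the Bell state `(b(0,0) + b(1,1))/√2`. -/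
theorem strong_rigidity_of_majorana_parities
    {H : Type*} [NormedAddCommGroup H] [InnerProductSpace ℂ H] [CompleteSpace H]
    (A₁₂ A₃₄ A₅₆ A₄₅ A₁₆ A₂₃ : H →L[ℂ] H)
    (h₁₂ : IsSelfAdjoint A₁₂) (h₃₄ : IsSelfAdjoint A₃₄) (h₅₆ : IsSelfAdjoint A₅₆)
    (h₄₅ : IsSelfAdjoint A₄₅) (h₁₆ : IsSelfAdjoint A₁₆) (h₂₃ : IsSelfAdjoint A₂₃)
    (hi₁₂ : A₁₂ ∘L A₁₂ = 1) (hi₃₄ : A₃₄ ∘L A₃₄ = 1) (hi₅₆ : A₅₆ ∘L A₅₆ = 1)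
    (hi₄₅ : A₄₅ ∘L A₄₅ = 1) (hi₁₆ : A₁₆ ∘L A₁₆ = 1) (hi₂₃ : A₂₃ ∘L A₂₃ = 1)
    (c₁ : A₁₂ ∘L A₃₄ = A₃₄ ∘L A₁₂) (c₂ : A₁₂ ∘L A₅₆ = A₅₆ ∘L A₁₂)
    (c₃ : A₃₄ ∘L A₅₆ = A₅₆ ∘L A₃₄) (c₄ : A₄₅ ∘L A₁₆ = A₁₆ ∘L A₄₅)
    (c₅ : A₄₅ ∘L A₂₃ = A₂₃ ∘L A₄₅) (c₆ : A₁₆ ∘L A₂₃ = A₂₃ ∘L A₁₆)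
    (c₇ : A₁₂ ∘L A₄₅ = A₄₅ ∘L A₁₂) (c₈ : A₃₄ ∘L A₁₆ = A₁₆ ∘L A₃₄)
    (c₉ : A₅₆ ∘L A₂₃ = A₂₃ ∘L A₅₆)
    (Ψ : H) (hΨ : ‖Ψ‖ = 1)
    (e₁ : ⟪Ψ, A₁₂ (A₃₄ (A₅₆ Ψ))⟫_ℂ = 1) (e₂ : ⟪Ψ, A₄₅ (A₁₆ (A₂₃ Ψ))⟫_ℂ = 1)
    (e₃ : ⟪Ψ, A₁₂ (A₄₅ Ψ)⟫_ℂ = 1) (e₄ : ⟪Ψ, A₃₄ (A₁₆ Ψ)⟫_ℂ = 1)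
    (e₅ : ⟪Ψ, A₅₆ (A₂₃ Ψ)⟫_ℂ = -1) :
    ∃ b : Fin 2 × Fin 2 → H,
      Orthonormal ℂ b ∧
      Submodule.span ℂ (Set.range b) =
        Submodule.span ℂ ({Ψ, A₁₂ Ψ, A₁₆ Ψ, A₁₂ (A₁₆ Ψ)} : Set H) ∧
      (∀ i j : Fin 2,
        A₁₂ (b (i, j)) = ((-1 : ℂ) ^ (i : ℕ)) • b (i, j) ∧
        A₄₅ (b (i, j)) = ((-1 : ℂ) ^ (j : ℕ)) • b (i, j) ∧
        A₁₆ (b (i, j)) = b (i + 1, j) ∧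
        A₃₄ (b (i, j)) = b (i, j + 1) ∧
        A₅₆ (b (i, j)) = ((-1 : ℂ) ^ (i : ℕ)) • b (i, j + 1) ∧
        A₂₃ (b (i, j)) = ((-1 : ℂ) ^ (j : ℕ)) • b (i + 1, j)) ∧
      Ψ = ((Real.sqrt 2 : ℂ))⁻¹ • (b (0, 0) + b (1, 1)) := by
  -- pointwise versions
  have i12 : ∀ x, A₁₂ (A₁₂ x) = x := fun x => by simpa using DFunLike.congr_fun hi₁₂ x
  have i34 : ∀ x, A₃₄ (A₃₄ x) = x := fun x => by simpa using DFunLike.congr_fun hi₃₄ x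
  have i56 : ∀ x, A₅₆ (A₅₆ x) = x := fun x => by simpa using DFunLike.congr_fun hi₅₆ x
  have i45 : ∀ x, A₄₅ (A₄₅ x) = x := fun x => by simpa using DFunLike.congr_fun hi₄₅ x
  have i16 : ∀ x, A₁₆ (A₁₆ x) = x := fun x => by simpa using DFunLike.congr_fun hi₁₆ x
  have i23 : ∀ x, A₂₃ (A₂₃ x) = x := fun x => by simpa using DFunLike.congr_fun hi₂₃ x
  have k1 : ∀ x, A₁₂ (A₃₄ x) = A₃₄ (A₁₂ x) := fun x => by simpa using DFunLike.congr_fun c₁ x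
  have k2 : ∀ x, A₁₂ (A₅₆ x) = A₅₆ (A₁₂ x) := fun x => by simpa using DFunLike.congr_fun c₂ x
  have k3 : ∀ x, A₃₄ (A₅₆ x) = A₅₆ (A₃₄ x) := fun x => by simpa using DFunLike.congr_fun c₃ x
  have k4 : ∀ x, A₄₅ (A₁₆ x) = A₁₆ (A₄₅ x) := fun x => by simpa using DFunLike.congr_fun c₄ x
  have k5 : ∀ x, A₄₅ (A₂₃ x) = A₂₃ (A₄₅ x) := fun x => by simpa using DFunLike.congr_fun c₅ x
  have k6 : ∀ x, A₁₆ (A₂₃ x) = A₂₃ (A₁₆ x) := fun x => by simpa using DFunLike.congr_fun c₆ x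
  have k7 : ∀ x, A₁₂ (A₄₅ x) = A₄₅ (A₁₂ x) := fun x => by simpa using DFunLike.congr_fun c₇ x
  have k8 : ∀ x, A₃₄ (A₁₆ x) = A₁₆ (A₃₄ x) := fun x => by simpa using DFunLike.congr_fun c₈ x
  have k9 : ∀ x, A₅₆ (A₂₃ x) = A₂₃ (A₅₆ x) := fun x => by simpa using DFunLike.congr_fun c₉ x
  -- norm preservation
  have nr12 := sr_norm h₁₂ i12
  have nr34 := sr_norm h₃₄ i34
  have nr56 := sr_norm h₅₆ i56
  have nr45 := sr_norm h₄₅ i45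
  have nr16 := sr_norm h₁₆ i16
  have nr23 := sr_norm h₂₃ i23
  -- eigenvector equations from expectations
  have E1 : A₁₂ (A₃₄ (A₅₆ Ψ)) = Ψ :=
    sr_fix Ψ _ hΨ (by rw [nr12, nr34, nr56, hΨ]) e₁
  have E2 : A₄₅ (A₁₆ (A₂₃ Ψ)) = Ψ :=
    sr_fix Ψ _ hΨ (by rw [nr45, nr16, nr23, hΨ]) e₂
  have E3 : A₁₂ (A₄₅ Ψ) = Ψ :=
    sr_fix Ψ _ hΨ (by rw [nr12, nr45, hΨ]) e₃
  have E4 : A₃₄ (A₁₆ Ψ) = Ψ :=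
    sr_fix Ψ _ hΨ (by rw [nr34, nr16, hΨ]) e₄
  have E5 : A₅₆ (A₂₃ Ψ) = -Ψ := by
    have h : -(A₅₆ (A₂₃ Ψ)) = Ψ :=
      sr_fix Ψ _ hΨ (by rw [norm_neg, nr56, nr23, hΨ]) (by rw [inner_neg_right, e₅]; ring)
    exact neg_eq_iff_eq_neg.mp h
  -- basic word relations
  have hP0 : A₄₅ Ψ = A₁₂ Ψ := by have h := congrArg A₁₂ E3; rwa [i12] at h
  have hQ0 : A₁₆ Ψ = A₃₄ Ψ := by have h := congrArg A₃₄ E4; rwa [i34] at h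
  have hZ0 : A₅₆ Ψ = A₃₄ (A₁₂ Ψ) := by
    have h1 : A₃₄ (A₅₆ Ψ) = A₁₂ Ψ := by have h := congrArg A₁₂ E1; rwa [i12] at h
    have h := congrArg A₃₄ h1; rwa [i34] at h
  have hR0' : A₂₃ Ψ = A₁₆ (A₄₅ Ψ) := by
    have h1 : A₁₆ (A₂₃ Ψ) = A₄₅ Ψ := by have h := congrArg A₄₅ E2; rwa [i45] at h
    have h := congrArg A₁₆ h1; rwa [i16] at h
  have hR0 : A₂₃ Ψ = -(A₃₄ (A₁₂ Ψ)) := by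
    have h := congrArg A₅₆ E5; rw [i56, map_neg, hZ0] at h; exact h
  have hXQ : A₁₂ (A₁₆ Ψ) = A₃₄ (A₁₂ Ψ) := by rw [hQ0, k1]
  have hQX : A₁₆ (A₁₂ Ψ) = -(A₁₂ (A₁₆ Ψ)) := by
    rw [← hP0, ← hR0', hR0, hXQ]
  -- action table on the four words  Ψ, A₁₂ Ψ, A₁₆ Ψ, A₁₂ (A₁₆ Ψ)
  have hY0 : A₃₄ Ψ = A₁₆ Ψ := hQ0.symm
  have hY1 : A₃₄ (A₁₂ Ψ) = A₁₂ (A₁₆ Ψ) := hXQ.symm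
  have hY3 : A₃₄ (A₁₂ (A₁₆ Ψ)) = A₁₂ Ψ := by rw [hXQ, i34]
  have hZw0 : A₅₆ Ψ = A₁₂ (A₁₆ Ψ) := hZ0.trans hXQ.symm
  have hZw1 : A₅₆ (A₁₂ Ψ) = A₁₆ Ψ := by rw [← k2, hZw0, i12]
  have hZw2 : A₅₆ (A₁₆ Ψ) = A₁₂ Ψ := by rw [hQ0, ← k3, hZ0, i34]
  have hZw3 : A₅₆ (A₁₂ (A₁₆ Ψ)) = Ψ := by rw [hXQ, ← k3, ← k2, hZ0, k1, i12, i34]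
  have hP1 : A₄₅ (A₁₂ Ψ) = Ψ := by rw [← k7, hP0, i12]
  have hP2 : A₄₅ (A₁₆ Ψ) = -(A₁₂ (A₁₆ Ψ)) := by rw [k4, hP0, hQX]
  have hP3 : A₄₅ (A₁₂ (A₁₆ Ψ)) = -(A₁₆ Ψ) := by rw [← k7, hP2, map_neg, i12]
  have hQw3 : A₁₆ (A₁₂ (A₁₆ Ψ)) = -(A₁₂ Ψ) := by
    rw [hXQ, ← k8, hQX, hXQ, map_neg, i34]
  have hRw0 : A₂₃ Ψ = -(A₁₂ (A₁₆ Ψ)) := by rw [hR0, hXQ]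
  have hRw1 : A₂₃ (A₁₂ Ψ) = A₁₆ Ψ := by rw [← hP0, ← k5, hRw0, map_neg, hP3, neg_neg]
  have hRw2 : A₂₃ (A₁₆ Ψ) = A₁₂ Ψ := by rw [← k6, hRw0, map_neg, hQw3, neg_neg]
  have hRw3 : A₂₃ (A₁₂ (A₁₆ Ψ)) = -Ψ := by rw [← hZw0, ← k9, E5]
  -- inner products
  have n0 : ⟪Ψ, Ψ⟫_ℂ = 1 := by
    rw [@inner_self_eq_norm_sq_to_K ℂ, hΨ]; norm_num
  have n1 : ⟪A₁₂ Ψ, A₁₂ Ψ⟫_ℂ = 1 := by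
    rw [@inner_self_eq_norm_sq_to_K ℂ, nr12, hΨ]; norm_num
  have n2 : ⟪A₁₆ Ψ, A₁₆ Ψ⟫_ℂ = 1 := by
    rw [@inner_self_eq_norm_sq_to_K ℂ, nr16, hΨ]; norm_num
  have n3 : ⟪A₁₂ (A₁₆ Ψ), A₁₂ (A₁₆ Ψ)⟫_ℂ = 1 := by
    rw [@inner_self_eq_norm_sq_to_K ℂ, nr12, nr16, hΨ]; norm_num
  have s0 : ⟪Ψ, A₁₂ Ψ⟫_ℂ = 0 := by
    have hA : ⟪A₃₄ Ψ, A₃₄ (A₁₂ Ψ)⟫_ℂ = ⟪Ψ, A₁₂ Ψ⟫_ℂ := by rw [sr_sa h₃₄, i34]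
    rw [hY0, hY1] at hA
    have hB : ⟪A₁₆ Ψ, A₁₂ (A₁₆ Ψ)⟫_ℂ = -⟪Ψ, A₁₂ Ψ⟫_ℂ := by
      rw [sr_sa h₁₆, hQw3, inner_neg_right]
    rw [hB] at hA
    linear_combination -hA / 2
  have u0 : ⟪A₁₆ Ψ, A₁₂ (A₁₆ Ψ)⟫_ℂ = 0 := by
    rw [sr_sa h₁₆, hQw3, inner_neg_right, s0, neg_zero]
  have s0' : ⟪A₁₂ Ψ, Ψ⟫_ℂ = 0 := by rw [← inner_conj_symm, s0, map_zero]
  have u0' : ⟪A₁₂ (A₁₆ Ψ), A₁₆ Ψ⟫_ℂ = 0 := by rw [← inner_conj_symm, u0, map_zero]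
  -- the scalar
  obtain ⟨c, hc⟩ : ∃ c : ℂ, c = ((Real.sqrt 2 : ℂ))⁻¹ := ⟨_, rfl⟩
  have hcc : c * c = (2 : ℂ)⁻¹ := by
    rw [hc, ← mul_inv, ← Complex.ofReal_mul, Real.mul_self_sqrt (by norm_num)]
    norm_num
  have hcconj : (starRingEnd ℂ) c = c := by
    rw [hc]; simp [Complex.conj_ofReal]
  -- the basis
  set b : Fin 2 × Fin 2 → H := fun p =>
    ![![c • (Ψ + A₁₂ Ψ), c • (A₁₆ Ψ + A₁₂ (A₁₆ Ψ))],
      ![c • (A₁₆ Ψ - A₁₂ (A₁₆ Ψ)), c • (Ψ - A₁₂ Ψ)]] p.1 p.2 with hbdef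
  have hb00 : b (0, 0) = c • (Ψ + A₁₂ Ψ) := rfl
  have hb01 : b (0, 1) = c • (A₁₆ Ψ + A₁₂ (A₁₆ Ψ)) := rfl
  have hb10 : b (1, 0) = c • (A₁₆ Ψ - A₁₂ (A₁₆ Ψ)) := rfl
  have hb11 : b (1, 1) = c • (Ψ - A₁₂ Ψ) := rfl
  -- full action facts
  have gX00 : A₁₂ (b (0, 0)) = ((-1 : ℂ) ^ (((0 : Fin 2)) : ℕ)) • b (0, 0) := by
    rw [hb00]; simp only [Fin.val_zero, pow_zero, map_smul, map_add, i12]; module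
  have gX01 : A₁₂ (b (0, 1)) = ((-1 : ℂ) ^ (((0 : Fin 2)) : ℕ)) • b (0, 1) := by
    rw [hb01]; simp only [Fin.val_zero, pow_zero, map_smul, map_add, i12]; module
  have gX10 : A₁₂ (b (1, 0)) = ((-1 : ℂ) ^ (((1 : Fin 2)) : ℕ)) • b (1, 0) := by
    rw [hb10]; simp only [Fin.val_one, pow_one, map_smul, map_sub, i12]; module
  have gX11 : A₁₂ (b (1, 1)) = ((-1 : ℂ) ^ (((1 : Fin 2)) : ℕ)) • b (1, 1) := by
    rw [hb11]; simp only [Fin.val_one, pow_one, map_smul, map_sub, i12]; module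
  have gP00 : A₄₅ (b (0, 0)) = ((-1 : ℂ) ^ (((0 : Fin 2)) : ℕ)) • b (0, 0) := by
    rw [hb00]; simp only [Fin.val_zero, pow_zero, map_smul, map_add, hP0, hP1]; module
  have gP10 : A₄₅ (b (1, 0)) = ((-1 : ℂ) ^ (((0 : Fin 2)) : ℕ)) • b (1, 0) := by
    rw [hb10]; simp only [Fin.val_zero, pow_zero, map_smul, map_sub, hP2, hP3]; module
  have gP01 : A₄₅ (b (0, 1)) = ((-1 : ℂ) ^ (((1 : Fin 2)) : ℕ)) • b (0, 1) := by
    rw [hb01]; simp only [Fin.val_one, pow_one, map_smul, map_add, hP2, hP3]; module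
  have gP11 : A₄₅ (b (1, 1)) = ((-1 : ℂ) ^ (((1 : Fin 2)) : ℕ)) • b (1, 1) := by
    rw [hb11]; simp only [Fin.val_one, pow_one, map_smul, map_sub, hP0, hP1]; module
  have gQ00 : A₁₆ (b (0, 0)) = b (1, 0) := by
    rw [hb00, hb10]; simp only [map_smul, map_add, hQX]; try module
  have gQ10 : A₁₆ (b (1, 0)) = b (0, 0) := by
    rw [hb10, hb00]; simp only [map_smul, map_sub, i16, hQw3]; try module
  have gQ01 : A₁₆ (b (0, 1)) = b (1, 1) := by
    rw [hb01, hb11]; simp only [map_smul, map_add, i16, hQw3]; try module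
  have gQ11 : A₁₆ (b (1, 1)) = b (0, 1) := by
    rw [hb11, hb01]; simp only [map_smul, map_sub, hQX]; try module
  have gY00 : A₃₄ (b (0, 0)) = b (0, 1) := by
    rw [hb00, hb01]; simp only [map_smul, map_add, hY0, hY1]; try module
  have gY01 : A₃₄ (b (0, 1)) = b (0, 0) := by
    rw [hb01, hb00]; simp only [map_smul, map_add, E4, hY3]; try module
  have gY10 : A₃₄ (b (1, 0)) = b (1, 1) := by
    rw [hb10, hb11]; simp only [map_smul, map_sub, E4, hY3]; try module
  have gY11 : A₃₄ (b (1, 1)) = b (1, 0) := by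
    rw [hb11, hb10]; simp only [map_smul, map_sub, hY0, hY1]; try module
  have gZ00 : A₅₆ (b (0, 0)) = ((-1 : ℂ) ^ (((0 : Fin 2)) : ℕ)) • b (0, 1) := by
    rw [hb00, hb01]; simp only [Fin.val_zero, pow_zero, map_smul, map_add, hZw0, hZw1]; module
  have gZ01 : A₅₆ (b (0, 1)) = ((-1 : ℂ) ^ (((0 : Fin 2)) : ℕ)) • b (0, 0) := by
    rw [hb01, hb00]; simp only [Fin.val_zero, pow_zero, map_smul, map_add, hZw2, hZw3]; module
  have gZ10 : A₅₆ (b (1, 0)) = ((-1 : ℂ) ^ (((1 : Fin 2)) : ℕ)) • b (1, 1) := by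
    rw [hb10, hb11]; simp only [Fin.val_one, pow_one, map_smul, map_sub, hZw2, hZw3]; module
  have gZ11 : A₅₆ (b (1, 1)) = ((-1 : ℂ) ^ (((1 : Fin 2)) : ℕ)) • b (1, 0) := by
    rw [hb11, hb10]; simp only [Fin.val_one, pow_one, map_smul, map_sub, hZw0, hZw1]; module
  have gR00 : A₂₃ (b (0, 0)) = ((-1 : ℂ) ^ (((0 : Fin 2)) : ℕ)) • b (1, 0) := by
    rw [hb00, hb10]; simp only [Fin.val_zero, pow_zero, map_smul, map_add, hRw0, hRw1]; module
  have gR10 : A₂₃ (b (1, 0)) = ((-1 : ℂ) ^ (((0 : Fin 2)) : ℕ)) • b (0, 0) := by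
    rw [hb10, hb00]; simp only [Fin.val_zero, pow_zero, map_smul, map_sub, hRw2, hRw3]; module
  have gR01 : A₂₃ (b (0, 1)) = ((-1 : ℂ) ^ (((1 : Fin 2)) : ℕ)) • b (1, 1) := by
    rw [hb01, hb11]; simp only [Fin.val_one, pow_one, map_smul, map_add, hRw2, hRw3]; module
  have gR11 : A₂₃ (b (1, 1)) = ((-1 : ℂ) ^ (((1 : Fin 2)) : ℕ)) • b (0, 1) := by
    rw [hb11, hb01]; simp only [Fin.val_one, pow_one, map_smul, map_sub, hRw0, hRw1]; module
  -- eigen facts without scalars (for orthogonality)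
  have hXb00 : A₁₂ (b (0, 0)) = b (0, 0) := by rw [gX00]; norm_num
  have hXb01 : A₁₂ (b (0, 1)) = b (0, 1) := by rw [gX01]; norm_num
  have hXb10 : A₁₂ (b (1, 0)) = -(b (1, 0)) := by rw [gX10]; norm_num
  have hXb11 : A₁₂ (b (1, 1)) = -(b (1, 1)) := by rw [gX11]; norm_num
  have hPb00 : A₄₅ (b (0, 0)) = b (0, 0) := by rw [gP00]; norm_num
  have hPb10 : A₄₅ (b (1, 0)) = b (1, 0) := by rw [gP10]; norm_num
  have hPb01 : A₄₅ (b (0, 1)) = -(b (0, 1)) := by rw [gP01]; norm_num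
  have hPb11 : A₄₅ (b (1, 1)) = -(b (1, 1)) := by rw [gP11]; norm_num
  -- orthogonality
  have o1 : ⟪b (0, 0), b (1, 1)⟫_ℂ = 0 := sr_ortho h₁₂ hXb00 hXb11
  have o2 : ⟪b (0, 0), b (1, 0)⟫_ℂ = 0 := sr_ortho h₁₂ hXb00 hXb10
  have o3 : ⟪b (0, 0), b (0, 1)⟫_ℂ = 0 := sr_ortho h₄₅ hPb00 hPb01
  have o4 : ⟪b (1, 0), b (1, 1)⟫_ℂ = 0 := sr_ortho h₄₅ hPb10 hPb11
  have o5 : ⟪b (0, 1), b (1, 1)⟫_ℂ = 0 := sr_ortho h₁₂ hXb01 hXb11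
  have o6 : ⟪b (0, 1), b (1, 0)⟫_ℂ = 0 := sr_ortho h₁₂ hXb01 hXb10
  have o1' : ⟪b (1, 1), b (0, 0)⟫_ℂ = 0 := by rw [← inner_conj_symm, o1, map_zero]
  have o2' : ⟪b (1, 0), b (0, 0)⟫_ℂ = 0 := by rw [← inner_conj_symm, o2, map_zero]
  have o3' : ⟪b (0, 1), b (0, 0)⟫_ℂ = 0 := by rw [← inner_conj_symm, o3, map_zero]
  have o4' : ⟪b (1, 1), b (1, 0)⟫_ℂ = 0 := by rw [← inner_conj_symm, o4, map_zero]
  have o5' : ⟪b (1, 1), b (0, 1)⟫_ℂ = 0 := by rw [← inner_conj_symm, o5, map_zero]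
  have o6' : ⟪b (1, 0), b (0, 1)⟫_ℂ = 0 := by rw [← inner_conj_symm, o6, map_zero]
  -- norms
  have d00 : ⟪b (0, 0), b (0, 0)⟫_ℂ = 1 := by
    rw [hb00]
    simp only [inner_smul_left, inner_smul_right, inner_add_left, inner_add_right,
      n0, n1, s0, s0', hcconj]
    linear_combination 2 * hcc
  have d11 : ⟪b (1, 1), b (1, 1)⟫_ℂ = 1 := by
    rw [hb11]
    simp only [inner_smul_left, inner_smul_right, inner_sub_left, inner_sub_right,
      n0, n1, s0, s0', hcconj]
    linear_combination 2 * hcc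
  have d01 : ⟪b (0, 1), b (0, 1)⟫_ℂ = 1 := by
    rw [hb01]
    simp only [inner_smul_left, inner_smul_right, inner_add_left, inner_add_right,
      n2, n3, u0, u0', hcconj]
    linear_combination 2 * hcc
  have d10 : ⟪b (1, 0), b (1, 0)⟫_ℂ = 1 := by
    rw [hb10]
    simp only [inner_smul_left, inner_smul_right, inner_sub_left, inner_sub_right,
      n2, n3, u0, u0', hcconj]
    linear_combination 2 * hcc
  refine ⟨b, ?_, ?_, ?_, ?_⟩
  · -- orthonormality
    rw [orthonormal_iff_ite]
    intro i j
    fin_cases i <;> fin_cases j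
    · rw [if_pos rfl]; exact d00
    · rw [if_neg (by decide)]; exact o3
    · rw [if_neg (by decide)]; exact o2
    · rw [if_neg (by decide)]; exact o1
    · rw [if_neg (by decide)]; exact o3'
    · rw [if_pos rfl]; exact d01
    · rw [if_neg (by decide)]; exact o6
    · rw [if_neg (by decide)]; exact o5
    · rw [if_neg (by decide)]; exact o2'
    · rw [if_neg (by decide)]; exact o6'
    · rw [if_pos rfl]; exact d10
    · rw [if_neg (by decide)]; exact o4
    · rw [if_neg (by decide)]; exact o1'
    · rw [if_neg (by decide)]; exact o5'
    · rw [if_neg (by decide)]; exact o4'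
    · rw [if_pos rfl]; exact d11
  · -- span equality
    apply le_antisymm
    · rw [Submodule.span_le]
      rintro x ⟨p, rfl⟩
      have m0 : Ψ ∈ Submodule.span ℂ ({Ψ, A₁₂ Ψ, A₁₆ Ψ, A₁₂ (A₁₆ Ψ)} : Set H) :=
        Submodule.subset_span (by simp)
      have m1 : A₁₂ Ψ ∈ Submodule.span ℂ ({Ψ, A₁₂ Ψ, A₁₆ Ψ, A₁₂ (A₁₆ Ψ)} : Set H) :=
        Submodule.subset_span (by simp)
      have m2 : A₁₆ Ψ ∈ Submodule.span ℂ ({Ψ, A₁₂ Ψ, A₁₆ Ψ, A₁₂ (A₁₆ Ψ)} : Set H) :=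
        Submodule.subset_span (by simp)
      have m3 : A₁₂ (A₁₆ Ψ) ∈ Submodule.span ℂ ({Ψ, A₁₂ Ψ, A₁₆ Ψ, A₁₂ (A₁₆ Ψ)} : Set H) :=
        Submodule.subset_span (by simp)
      fin_cases p
      · have h : b (0, 0) ∈ Submodule.span ℂ ({Ψ, A₁₂ Ψ, A₁₆ Ψ, A₁₂ (A₁₆ Ψ)} : Set H) := by
          rw [hb00]; exact Submodule.smul_mem _ _ (add_mem m0 m1)
        exact h
      · have h : b (0, 1) ∈ Submodule.span ℂ ({Ψ, A₁₂ Ψ, A₁₆ Ψ, A₁₂ (A₁₆ Ψ)} : Set H) := by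
          rw [hb01]; exact Submodule.smul_mem _ _ (add_mem m2 m3)
        exact h
      · have h : b (1, 0) ∈ Submodule.span ℂ ({Ψ, A₁₂ Ψ, A₁₆ Ψ, A₁₂ (A₁₆ Ψ)} : Set H) := by
          rw [hb10]; exact Submodule.smul_mem _ _ (sub_mem m2 m3)
        exact h
      · have h : b (1, 1) ∈ Submodule.span ℂ ({Ψ, A₁₂ Ψ, A₁₆ Ψ, A₁₂ (A₁₆ Ψ)} : Set H) := by
          rw [hb11]; exact Submodule.smul_mem _ _ (sub_mem m0 m1)
        exact h
    · rw [Submodule.span_le]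
      have mb00 : b (0, 0) ∈ Submodule.span ℂ (Set.range b) :=
        Submodule.subset_span ⟨(0, 0), rfl⟩
      have mb01 : b (0, 1) ∈ Submodule.span ℂ (Set.range b) :=
        Submodule.subset_span ⟨(0, 1), rfl⟩
      have mb10 : b (1, 0) ∈ Submodule.span ℂ (Set.range b) :=
        Submodule.subset_span ⟨(1, 0), rfl⟩
      have mb11 : b (1, 1) ∈ Submodule.span ℂ (Set.range b) :=
        Submodule.subset_span ⟨(1, 1), rfl⟩
      intro x hx
      simp only [Set.mem_insert_iff, Set.mem_singleton_iff] at hx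
      rcases hx with h | h | h | h <;> rw [h]
      · have hid : Ψ = c • b (0, 0) + c • b (1, 1) := by
          rw [hb00, hb11]; match_scalars <;>
            first | ring1 | linear_combination 2 * hcc | linear_combination (-2 : ℂ) * hcc
        rw [hid]; exact add_mem (Submodule.smul_mem _ _ mb00) (Submodule.smul_mem _ _ mb11)
      · have hid : A₁₂ Ψ = c • b (0, 0) - c • b (1, 1) := by
          rw [hb00, hb11]; match_scalars <;>
            first | ring1 | linear_combination 2 * hcc | linear_combination (-2 : ℂ) * hcc
        rw [hid]; exact sub_mem (Submodule.smul_mem _ _ mb00) (Submodule.smul_mem _ _ mb11)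
      · have hid : A₁₆ Ψ = c • b (0, 1) + c • b (1, 0) := by
          rw [hb01, hb10]; match_scalars <;>
            first | ring1 | linear_combination 2 * hcc | linear_combination (-2 : ℂ) * hcc
        rw [hid]; exact add_mem (Submodule.smul_mem _ _ mb01) (Submodule.smul_mem _ _ mb10)
      · have hid : A₁₂ (A₁₆ Ψ) = c • b (0, 1) - c • b (1, 0) := by
          rw [hb01, hb10]; match_scalars <;>
            first | ring1 | linear_combination 2 * hcc | linear_combination (-2 : ℂ) * hcc
        rw [hid]; exact sub_mem (Submodule.smul_mem _ _ mb01) (Submodule.smul_mem _ _ mb10)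
  · -- the Pauli action
    intro i j
    fin_cases i <;> fin_cases j
    · exact ⟨gX00, gP00, gQ00, gY00, gZ00, gR00⟩
    · exact ⟨gX01, gP01, gQ01, gY01, gZ01, gR01⟩
    · exact ⟨gX10, gP10, gQ10, gY10, gZ10, gR10⟩
    · exact ⟨gX11, gP11, gQ11, gY11, gZ11, gR11⟩
  · -- Bell state
    rw [← hc, hb00, hb11]
    match_scalars <;>
      first | ring1 | linear_combination 2 * hcc | linear_combination (-2 : ℂ) * hcc
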